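/- Let f be a polynomial over F of degree at most k−1. Then for every integer ℓ with 2 ≤ ℓ ≤ ⌊(p^{mt} − k)/p^{m(t−1)}⌋, the following identity holds in F: Σ_{α∈F∖{0}} α^ℓ · ι(Tr(f(α)/α)) = 0, where ι : B → F is the field inclusion. -/

import Mathlib

/-- for `f` of degree at most `k − 1` and every integer `ℓ` with
`2 ≤ ℓ ≤ ⌊(p^{mt} − k)/p^{m(t−1)}⌋`, one has `Σ_{α ≠ 0} α^ℓ·ι(Tr(f(α)/α)) = 0` in `F`,
where `ι : B → F` is the field inclusion. -/
theorem stmt_7 (p m t k : ℕ) (hp : p.Prime) (hm : 1 ≤ m) (ht : 1 ≤ t) (hk : 1 ≤ k)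
    (B F : Type) [Field B] [Field F] [Fintype B] [Fintype F] [Algebra B F]
    [DecidableEq F]
    (hcardB : Fintype.card B = p ^ m) (hcardF : Fintype.card F = p ^ (m * t))
    (Tr : F → B)
    (hTr : ∀ x : F, algebraMap B F (Tr x) = ∑ i ∈ Finset.range t, x ^ p ^ (m * i))
    (f : Polynomial F)
    (hf : f.degree ≤ ((k - 1 : ℕ) : WithBot ℕ)) :
    ∀ ℓ : ℕ, 2 ≤ ℓ → ℓ ≤ (p ^ (m * t) - k) / p ^ (m * (t - 1)) →
      ∑ α ∈ Finset.univ \ {0}, α ^ ℓ * algebraMap B F (Tr (f.eval α / α)) = 0 := by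
  intro ℓ hℓ2 hℓle
  classical
  haveI : Fact p.Prime := ⟨hp⟩
  have hpF : (p : F) = 0 := by
    have h0 : ((Fintype.card F : ℕ) : F) = 0 := Nat.cast_card_eq_zero F
    rw [hcardF] at h0
    push_cast at h0
    exact pow_eq_zero_iff (by positivity : m * t ≠ 0) |>.mp h0
  set q := p ^ (m * t) with hqdef
  have hq1 : 1 ≤ q := Nat.one_le_pow _ _ hp.pos
  haveI : CharP F p := (CharP.charP_iff_prime_eq_zero hp).2 hpF
  -- numeric bounds
  have hQpos : 0 < p ^ (m * (t - 1)) := Nat.pow_pos hp.pos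
  have hlQ : ℓ * p ^ (m * (t - 1)) ≤ q - k := (Nat.le_div_iff_mul_le hQpos).mp hℓle
  have hlq : ℓ ≤ q - k := le_trans (Nat.le_mul_of_pos_right ℓ hQpos) hlQ
  have hkq : k + 2 ≤ q := by omega
  -- degree bound
  have hdeg : f.natDegree < k := by
    have h1 : f.natDegree ≤ k - 1 := Polynomial.natDegree_le_iff_degree_le.mpr hf
    omega
  -- helper: no multiple strictly between a and 2a
  have hhelp : ∀ a n : ℕ, a < n → n < 2 * a → ¬ a ∣ n := by
    rintro a n h1 h2 ⟨c, rfl⟩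
    rcases Nat.lt_or_ge c 2 with h | h
    · interval_cases c <;> omega
    · have := Nat.mul_le_mul_left a h
      omega
  -- key divisibility fact
  have hndvd : ∀ i < t, ∀ j < k, ¬ (q - 1) ∣ (ℓ + (j + (q - 2)) * p ^ (m * i)) := by
    intro i hi j hj hdvd
    rcases Nat.eq_zero_or_pos i with rfl | hi1
    · simp only [Nat.mul_zero, pow_zero, mul_one] at hdvd
      exact hhelp (q - 1) (ℓ + (j + (q - 2))) (by omega) (by omega) hdvd
    · -- multiply by p^(m*(t-i))
      have hmul : (q - 1) ∣ (ℓ + (j + (q - 2)) * p ^ (m * i)) * p ^ (m * (t - i)) :=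
        hdvd.mul_right _
      have hpow : p ^ (m * i) * p ^ (m * (t - i)) = q := by
        rw [← pow_add, hqdef]
        congr 1
        have : i ≤ t := le_of_lt hi
        rw [← Nat.mul_add]
        congr 1
        omega
      have hexp : (ℓ + (j + (q - 2)) * p ^ (m * i)) * p ^ (m * (t - i))
          = (j + (q - 2)) * (q - 1) + (ℓ * p ^ (m * (t - i)) + (j + (q - 2))) := by
        rw [add_mul, mul_assoc, hpow]
        have : (j + (q - 2)) * q = (j + (q - 2)) * (q - 1) + (j + (q - 2)) := by
          calc (j + (q - 2)) * q = (j + (q - 2)) * ((q - 1) + 1) := by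
                congr 1
                omega
            _ = (j + (q - 2)) * (q - 1) + (j + (q - 2)) := by ring
        omega
      rw [hexp] at hmul
      have hE : (q - 1) ∣ (ℓ * p ^ (m * (t - i)) + (j + (q - 2))) :=
        (Nat.dvd_add_right (dvd_mul_left _ _)).mp hmul
      -- bounds on E
      have hmono : p ^ (m * (t - i)) ≤ p ^ (m * (t - 1)) :=
        Nat.pow_le_pow_right hp.pos (Nat.mul_le_mul_left m (by omega))
      have hup : ℓ * p ^ (m * (t - i)) ≤ q - k :=
        le_trans (Nat.mul_le_mul_left ℓ hmono) hlQ
      have hlo : 2 ≤ ℓ * p ^ (m * (t - i)) := by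
        have : 1 ≤ p ^ (m * (t - i)) := Nat.one_le_pow _ _ hp.pos
        calc 2 = 2 * 1 := by omega
        _ ≤ ℓ * p ^ (m * (t - i)) := Nat.mul_le_mul hℓ2 this
      exact hhelp (q - 1) (ℓ * p ^ (m * (t - i)) + (j + (q - 2))) (by omega) (by omega) hE
  -- key sum fact: sum of α^n over nonzero α is 0 when (q-1) ∤ n
  have key : ∀ n : ℕ, ¬ (q - 1) ∣ n → ∑ α ∈ Finset.univ \ {0}, (α : F) ^ n = 0 := by
    intro n hn
    let φ : Fˣ ↪ F := ⟨fun x ↦ x, fun _ _ h => Units.ext h⟩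
    have hmap : Finset.univ.map φ = Finset.univ \ {0} := by
      ext x
      simp only [Finset.mem_map, Finset.mem_univ, true_and,
        Finset.mem_sdiff, Finset.mem_singleton]
      exact isUnit_iff_ne_zero
    rw [← hmap, Finset.sum_map]
    have h := FiniteField.sum_pow_units F n
    rw [hcardF, if_neg hn] at h
    exact h
  -- rewrite each summand
  have step1 : ∀ α ∈ (Finset.univ \ {0} : Finset F),
      α ^ ℓ * algebraMap B F (Tr (f.eval α / α))
      = ∑ i ∈ Finset.range t, ∑ j ∈ Finset.range k,
          (f.coeff j) ^ (p ^ (m * i)) * α ^ (ℓ + (j + (q - 2)) * p ^ (m * i)) := by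
    intro α hα
    have hα0 : α ≠ 0 := by
      simpa [Finset.mem_sdiff] using hα
    have hinv : α⁻¹ = α ^ (q - 2) := by
      refine inv_eq_of_mul_eq_one_right ?_
      have h1 : α * α ^ (q - 2) = α ^ (q - 1) := by
        rw [← pow_succ']
        congr 1
        omega
      rw [h1, ← hcardF]
      exact FiniteField.pow_card_sub_one_eq_one α hα0
    have heval : f.eval α = ∑ j ∈ Finset.range k, f.coeff j * α ^ j :=
      Polynomial.eval_eq_sum_range' hdeg α
    rw [hTr, Finset.mul_sum]
    refine Finset.sum_congr rfl fun i hi => ?_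
    rw [div_eq_mul_inv, hinv, heval, mul_pow, sum_pow_char_pow, Finset.sum_mul,
      Finset.mul_sum]
    refine Finset.sum_congr rfl fun j hj => ?_
    rw [mul_pow, ← pow_mul, ← pow_mul]
    have hexp : ℓ + (j + (q - 2)) * p ^ (m * i)
        = j * p ^ (m * i) + ((q - 2) * p ^ (m * i) + ℓ) := by ring
    rw [hexp, pow_add, pow_add]
    ring
  rw [Finset.sum_congr rfl step1, Finset.sum_comm]
  refine Finset.sum_eq_zero fun i hi => ?_
  rw [Finset.sum_comm]
  refine Finset.sum_eq_zero fun j hj => ?_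
  rw [← Finset.mul_sum,
    key _ (hndvd i (Finset.mem_range.mp hi) j (Finset.mem_range.mp hj)), mul_zero]
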